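/- Suppose ν > 0, Δ > 0, α ∈ (0,1), the laws of √T(m̂_T − m²) converge weakly to the Gaussian distribution N(0, ν²) as T → ∞, and ν̂_T → ν in probability. Then lim_{T→∞} P( m̂_T − Δ < ν̂_T · u_α / √T ) equals 0 if m² > Δ, equals α if m² = Δ, and equals 1 if m² < Δ. Consequently the test for 'similarity to stationarity' that rejects H_Δ : m² ≥ Δ in favour of K_Δ : m² < Δ whenever m̂_T − Δ < ν̂_T u_α/√T is a consistent asymptotic level-α test. -/

import Mathlib

open MeasureTheory Filter ProbabilityTheory Set

lemma aux_toReal_union {Ω : Type*} [MeasurableSpace Ω] (P : Measure Ω) [IsProbabilityMeasure P]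
    {S S1 S2 : Set Ω} (h : S ⊆ S1 ∪ S2) :
    (P S).toReal ≤ (P S1).toReal + (P S2).toReal := by
  rw [← ENNReal.toReal_add (measure_ne_top P S1) (measure_ne_top P S2)]
  exact ENNReal.toReal_mono
    (ENNReal.add_ne_top.2 ⟨measure_ne_top _ _, measure_ne_top _ _⟩)
    ((measure_mono h).trans (measure_union_le _ _))

lemma aux_iInter_Iic_neg : (⋂ n : ℕ, Iic (-(n : ℝ))) = ∅ := by
  ext x
  simp only [mem_iInter, mem_Iic, mem_empty_iff_false, iff_false, not_forall]
  obtain ⟨n, hn⟩ := exists_nat_gt (-x)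
  exact ⟨n, by push_neg; linarith⟩

lemma aux_iInter_Ioc (a : ℝ) : (⋂ n : ℕ, Ioc (a - 1 / (n + 1)) (a + 1 / (n + 1))) = {a} := by
  ext x
  simp only [mem_iInter, mem_Ioc, mem_singleton_iff]
  constructor
  · intro h
    have h1 : x ≤ a := by
      by_contra hc
      push_neg at hc
      obtain ⟨n, hn⟩ := exists_nat_one_div_lt (show (0:ℝ) < x - a by linarith)
      have := (h n).2
      linarith
    have h2 : a ≤ x := by
      by_contra hc
      push_neg at hc
      obtain ⟨n, hn⟩ := exists_nat_one_div_lt (show (0:ℝ) < a - x by linarith)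
      have := (h n).1
      linarith
    linarith
  · rintro rfl n
    have : (0:ℝ) < 1 / (n + 1) := by positivity
    constructor <;> linarith

lemma aux_sqrt_event (K : ℝ) : ∀ᶠ T : ℕ in atTop, K ≤ Real.sqrt T := by
  filter_upwards [tendsto_natCast_atTop_atTop.eventually_ge_atTop (K ^ 2)] with T hT
  exact Real.le_sqrt_of_sq_le hT

lemma aux_quantile (ν u α : ℝ) (hν : 0 < ν)
    (hu : ((gaussianReal 0 1) (Set.Iic u)).toReal = α) :
    ((gaussianReal 0 (Real.toNNReal (ν ^ 2))) (Iic (ν * u))).toReal = α := by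
  have hmap := gaussianReal_map_const_mul (μ := 0) (v := 1) ν
  have hv2 : (NNReal.mk (ν ^ 2) (sq_nonneg ν) * 1 : NNReal) = Real.toNNReal (ν ^ 2) := by
    ext
    simp [Real.coe_toNNReal _ (sq_nonneg ν)]
  rw [mul_zero, hv2] at hmap
  rw [← hmap, Measure.map_apply (measurable_const_mul ν) measurableSet_Iic]
  have hpre : (fun x => ν * x) ⁻¹' Iic (ν * u) = Iic u := by
    ext x
    simp [mul_le_mul_iff_of_pos_left hν]
  rw [hpre, hu]

lemma aux_cdf_conv {Ω : Type*} [MeasurableSpace Ω] (P : Measure Ω) [IsProbabilityMeasure P]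
    (X : ℕ → Ω → ℝ) (hXm : ∀ T, Measurable (X T)) (v2 : NNReal) (hv2 : v2 ≠ 0)
    (hconv : ∀ f : BoundedContinuousFunction ℝ ℝ,
      Tendsto (fun T : ℕ => ∫ ω, f (X T ω) ∂P) atTop
        (nhds (∫ x, f x ∂(gaussianReal 0 v2)))) :
    ∀ t : ℝ, Tendsto (fun T => (P {ω | X T ω < t}).toReal) atTop
      (nhds ((gaussianReal 0 v2 (Iic t)).toReal)) := by
  set μ0 : Measure ℝ := gaussianReal 0 v2 with hμ0
  let μs : ℕ → ProbabilityMeasure ℝ :=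
    fun T => ⟨P.map (X T), Measure.isProbabilityMeasure_map (hXm T).aemeasurable⟩
  let μlim : ProbabilityMeasure ℝ := ⟨μ0, inferInstance⟩
  have hws : Tendsto μs atTop (nhds μlim) := by
    rw [ProbabilityMeasure.tendsto_iff_forall_integral_tendsto]
    intro f
    refine (hconv f).congr fun T => ?_
    exact (integral_map (hXm T).aemeasurable f.continuous.aestronglyMeasurable).symm
  intro t
  have hnull : μ0 {t} = 0 :=
    gaussianReal_absolutelyContinuous 0 hv2 (Real.volume_singleton)
  have hfr : (μlim : Measure ℝ) (frontier (Iio t)) = 0 := by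
    rw [frontier_Iio]; exact hnull
  have hmap := ProbabilityMeasure.tendsto_measure_of_null_frontier_of_tendsto' hws hfr
  have hIio : (μlim : Measure ℝ) (Iio t) = μ0 (Iic t) :=
    measure_congr (Iio_ae_eq_Iic' hnull)
  rw [hIio] at hmap
  have h2 := (ENNReal.tendsto_toReal (measure_ne_top μ0 _)).comp hmap
  refine h2.congr fun T => ?_
  simp only [Function.comp_apply]
  congr 1
  show (P.map (X T)) (Iio t) = P {ω | X T ω < t}
  rw [Measure.map_apply (hXm T) measurableSet_Iio]
  rfl

lemma aux_decomp (μ0 : Measure ℝ) [IsProbabilityMeasure μ0] {a b : ℝ} (h : a ≤ b) :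
    (μ0 (Iic b)).toReal = (μ0 (Iic a)).toReal + (μ0 (Ioc a b)).toReal := by
  rw [← ENNReal.toReal_add (measure_ne_top _ _) (measure_ne_top _ _),
    ← measure_union (Iic_disjoint_Ioc le_rfl) measurableSet_Ioc, Iic_union_Ioc_eq_Iic h]

/-- **Test for similarity to stationarity.**  Suppose `ν > 0`, `Δ > 0`, `α ∈ (0,1)`,
the laws of `√T(m̂_T − m²)` converge weakly to `N(0, ν²)` as `T → ∞`, and `ν̂_T → ν`
in probability.  Then, with `u_α` the `α`-quantile of the standard normal
distribution, `lim_{T→∞} P(m̂_T − Δ < ν̂_T·u_α/√T)` equals `0` if `m² > Δ`, equals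
`α` if `m² = Δ`, and equals `1` if `m² < Δ`.  Consequently the test rejecting
`H_Δ : m² ≥ Δ` in favour of `K_Δ : m² < Δ` whenever `m̂_T − Δ < ν̂_T u_α/√T` is a
consistent asymptotic level-α test. -/
theorem similarity_to_stationarity_test
    {Ω : Type*} [MeasurableSpace Ω] (P : Measure Ω) [IsProbabilityMeasure P]
    (mhat vhat : ℕ → Ω → ℝ)
    (hmeas : ∀ T, Measurable (mhat T)) (hvmeas : ∀ T, Measurable (vhat T))
    (m2 ν Δ : ℝ) (hν : 0 < ν) (hΔ : 0 < Δ)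
    (α : ℝ) (hα : α ∈ Set.Ioo (0 : ℝ) 1)
    (hconv : ∀ f : BoundedContinuousFunction ℝ ℝ,
      Tendsto (fun T : ℕ => ∫ ω, f (Real.sqrt T * (mhat T ω - m2)) ∂P) atTop
        (nhds (∫ x, f x ∂(gaussianReal 0 (Real.toNNReal (ν ^ 2))))))
    (hvconv : TendstoInMeasure P vhat atTop (fun _ => ν))
    (u : ℝ) (hu : ((gaussianReal 0 1) (Set.Iic u)).toReal = α) :
    (Δ < m2 →
      Tendsto (fun T : ℕ =>
          (P {ω | mhat T ω - Δ < vhat T ω * u / Real.sqrt T}).toReal)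
        atTop (nhds 0))
    ∧ (m2 = Δ →
      Tendsto (fun T : ℕ =>
          (P {ω | mhat T ω - Δ < vhat T ω * u / Real.sqrt T}).toReal)
        atTop (nhds α))
    ∧ (m2 < Δ →
      Tendsto (fun T : ℕ =>
          (P {ω | mhat T ω - Δ < vhat T ω * u / Real.sqrt T}).toReal)
        atTop (nhds 1)) := by
  obtain ⟨hα0, hα1⟩ := hα
  have hν2 : (Real.toNNReal (ν ^ 2)) ≠ 0 :=
    (Real.toNNReal_pos.mpr (by positivity)).ne'
  set v2 := Real.toNNReal (ν ^ 2) with hv2def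
  set μ0 : Measure ℝ := gaussianReal 0 v2 with hμ0def
  set X : ℕ → Ω → ℝ := fun T ω => Real.sqrt T * (mhat T ω - m2) with hX
  have hXm : ∀ T, Measurable (X T) := fun T => ((hmeas T).sub measurable_const).const_mul _
  have hcdf := aux_cdf_conv P X hXm v2 hν2 hconv
  have hquant : (μ0 (Iic (ν * u))).toReal = α := aux_quantile ν u α hν hu
  have Fmono : ∀ {a b : ℝ}, a ≤ b → (μ0 (Iic a)).toReal ≤ (μ0 (Iic b)).toReal :=
    fun h => ENNReal.toReal_mono (measure_ne_top _ _) (measure_mono (Iic_subset_Iic.mpr h))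
  have hP1 : ∀ s : Set Ω, (P s).toReal ≤ 1 := fun s => by
    rw [← ENNReal.toReal_one]
    exact ENNReal.toReal_mono ENNReal.one_ne_top prob_le_one
  have hbad : ∀ δ : ℝ, 0 < δ →
      Tendsto (fun T => (P {ω | δ ≤ dist (vhat T ω) ν}).toReal) atTop (nhds 0) := by
    intro δ hδ
    have h := tendstoInMeasure_iff_dist.mp hvconv δ hδ
    have h2 := (ENNReal.tendsto_toReal (by simp)).comp h
    exact h2
  set c : ℕ → ℝ := fun T => Real.sqrt T * (Δ - m2) with hc
  have hev : ∀ᶠ T : ℕ in atTop, {ω | mhat T ω - Δ < vhat T ω * u / Real.sqrt T}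
      = {ω | X T ω < vhat T ω * u + c T} := by
    filter_upwards [eventually_ge_atTop 1] with T hT
    have hs : 0 < Real.sqrt T := Real.sqrt_pos.mpr (by exact_mod_cast hT)
    ext ω
    simp only [Set.mem_setOf_eq, hX, hc]
    rw [lt_div_iff₀ hs]
    constructor <;> intro h <;> nlinarith [h]
  have heqev : (fun T => (P {ω | X T ω < vhat T ω * u + c T}).toReal)
      =ᶠ[atTop] (fun T : ℕ =>
        (P {ω | mhat T ω - Δ < vhat T ω * u / Real.sqrt T}).toReal) :=
    hev.mono fun T h => by simp only [h]
  refine ⟨?_, ?_, ?_⟩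
  -- Case Δ < m2 : limit 0
  · intro hm
    refine Tendsto.congr' heqev ?_
    rw [Metric.tendsto_nhds]
    intro ε hε
    obtain ⟨M, hM⟩ : ∃ M : ℝ, (μ0 (Iic (-M))).toReal < ε / 4 := by
      have htend := tendsto_measure_iInter_atTop (μ := μ0) (s := fun n : ℕ => Iic (-(n : ℝ)))
        (fun n => measurableSet_Iic.nullMeasurableSet)
        (fun n m hnm => Iic_subset_Iic.mpr (neg_le_neg (Nat.cast_le.mpr hnm)))
        ⟨0, measure_ne_top _ _⟩
      rw [aux_iInter_Iic_neg, measure_empty] at htend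
      have hev2 := htend.eventually_lt_const
        (show (0 : ENNReal) < ENNReal.ofReal (ε / 4) from ENNReal.ofReal_pos.mpr (by linarith))
      obtain ⟨n, hn⟩ := hev2.exists
      exact ⟨(n : ℝ), ENNReal.toReal_lt_of_lt_ofReal hn⟩
    have hcT : ∀ᶠ T : ℕ in atTop, c T ≤ -(M + ν * |u| + |u|) := by
      have hpos : 0 < m2 - Δ := by linarith
      filter_upwards [aux_sqrt_event ((M + ν * |u| + |u|) / (m2 - Δ))] with T hT
      have hK : (M + ν * |u| + |u|) / (m2 - Δ) * (m2 - Δ) = M + ν * |u| + |u| :=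
        div_mul_cancel₀ _ (ne_of_gt hpos)
      have h2 := mul_le_mul_of_nonneg_right hT hpos.le
      simp only [hc]
      nlinarith [h2, hK]
    have hq := Metric.tendsto_nhds.mp (hcdf (-M)) (ε / 4) (by linarith)
    have hb := Metric.tendsto_nhds.mp (hbad 1 one_pos) (ε / 4) (by linarith)
    filter_upwards [hcT, hq, hb] with T hcT' hq' hb'
    rw [Real.dist_eq] at hq' hb' ⊢
    have hsub : {ω | X T ω < vhat T ω * u + c T}
        ⊆ {ω | X T ω < -M} ∪ {ω | (1:ℝ) ≤ dist (vhat T ω) ν} := by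
      intro ω hω
      simp only [Set.mem_setOf_eq, Set.mem_union] at *
      by_cases hg : (1:ℝ) ≤ dist (vhat T ω) ν
      · exact Or.inr hg
      · left
        rw [Real.dist_eq] at hg
        push_neg at hg
        have h2 : (vhat T ω - ν) * u ≤ |vhat T ω - ν| * |u| := by
          rw [← abs_mul]; exact le_abs_self _
        have h3 : |vhat T ω - ν| * |u| ≤ 1 * |u| :=
          mul_le_mul_of_nonneg_right hg.le (abs_nonneg u)
        have h4 : ν * u ≤ ν * |u| := mul_le_mul_of_nonneg_left (le_abs_self u) hν.le
        have h5 : vhat T ω * u - ν * u = (vhat T ω - ν) * u := by ring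
        linarith [hω]
    have hle := aux_toReal_union P hsub
    have hnn : 0 ≤ (P {ω | X T ω < vhat T ω * u + c T}).toReal := ENNReal.toReal_nonneg
    have habs1 := abs_lt.mp hq'
    have habs2 := abs_lt.mp hb'
    rw [sub_zero, abs_lt]
    constructor <;> [linarith; skip]
    have : (P {ω | X T ω < -M}).toReal < ε / 2 := by linarith [habs1.2]
    linarith [habs2.2, hM, habs1.2]
  -- Case m2 = Δ : limit α
  · intro hm
    have hc0 : ∀ T, c T = 0 := fun T => by simp [hc, hm]
    refine Tendsto.congr' heqev ?_
    rw [Metric.tendsto_nhds]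
    intro ε hε
    have hnull : μ0 {ν * u} = 0 :=
      gaussianReal_absolutelyContinuous 0 hν2 (Real.volume_singleton)
    obtain ⟨d, hd, hgap⟩ : ∃ d > 0, (μ0 (Ioc (ν * u - d) (ν * u + d))).toReal < ε / 4 := by
      have hanti : Antitone (fun n : ℕ => Ioc (ν * u - 1 / (n + 1)) (ν * u + 1 / (n + 1))) := by
        intro n m hnm
        have h1 : (1:ℝ) / (m + 1) ≤ 1 / (n + 1) := by
          apply one_div_le_one_div_of_le (by positivity)
          exact_mod_cast Nat.succ_le_succ hnm
        exact Ioc_subset_Ioc (by linarith) (by linarith)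
      have htend := tendsto_measure_iInter_atTop (μ := μ0)
        (s := fun n : ℕ => Ioc (ν * u - 1 / (n + 1)) (ν * u + 1 / (n + 1)))
        (fun n => measurableSet_Ioc.nullMeasurableSet) hanti ⟨0, measure_ne_top _ _⟩
      rw [aux_iInter_Ioc, hnull] at htend
      have hev2 := htend.eventually_lt_const
        (show (0 : ENNReal) < ENNReal.ofReal (ε / 4) from ENNReal.ofReal_pos.mpr (by linarith))
      obtain ⟨n, hn⟩ := hev2.exists
      exact ⟨1 / (n + 1), by positivity, ENNReal.toReal_lt_of_lt_ofReal hn⟩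
    have hdec := aux_decomp μ0 (show ν * u - d ≤ ν * u + d by linarith)
    have hup : (μ0 (Iic (ν * u + d))).toReal < α + ε / 4 := by
      have := Fmono (show ν * u - d ≤ ν * u by linarith)
      linarith [hquant]
    have hlo : α - ε / 4 < (μ0 (Iic (ν * u - d))).toReal := by
      have := Fmono (show ν * u ≤ ν * u + d by linarith)
      linarith [hquant]
    set δ := d / (|u| + 1) with hδdef
    have hδ : 0 < δ := by positivity
    have hq1 := Metric.tendsto_nhds.mp (hcdf (ν * u + d)) (ε / 4) (by linarith)
    have hq2 := Metric.tendsto_nhds.mp (hcdf (ν * u - d)) (ε / 4) (by linarith)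
    have hb := Metric.tendsto_nhds.mp (hbad δ hδ) (ε / 4) (by linarith)
    filter_upwards [hq1, hq2, hb] with T hq1' hq2' hb'
    rw [Real.dist_eq] at hq1' hq2' hb' ⊢
    have hδu : δ * |u| < d := by
      rw [hδdef, div_mul_eq_mul_div, div_lt_iff₀ (by positivity)]
      nlinarith [abs_nonneg u]
    have hsub1 : {ω | X T ω < vhat T ω * u + c T}
        ⊆ {ω | X T ω < ν * u + d} ∪ {ω | δ ≤ dist (vhat T ω) ν} := by
      intro ω hω
      simp only [Set.mem_setOf_eq, Set.mem_union, hc0] at *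
      by_cases hg : δ ≤ dist (vhat T ω) ν
      · exact Or.inr hg
      · left
        rw [Real.dist_eq] at hg
        push_neg at hg
        have h2 : (vhat T ω - ν) * u ≤ |vhat T ω - ν| * |u| := by
          rw [← abs_mul]; exact le_abs_self _
        have h3 : |vhat T ω - ν| * |u| ≤ δ * |u| :=
          mul_le_mul_of_nonneg_right hg.le (abs_nonneg u)
        have h5 : vhat T ω * u - ν * u = (vhat T ω - ν) * u := by ring
        linarith [hω]
    have hsub2 : {ω | X T ω < ν * u - d}
        ⊆ {ω | X T ω < vhat T ω * u + c T} ∪ {ω | δ ≤ dist (vhat T ω) ν} := by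
      intro ω hω
      simp only [Set.mem_setOf_eq, Set.mem_union, hc0] at *
      by_cases hg : δ ≤ dist (vhat T ω) ν
      · exact Or.inr hg
      · left
        rw [Real.dist_eq] at hg
        push_neg at hg
        have h2 : (ν - vhat T ω) * u ≤ |ν - vhat T ω| * |u| := by
          rw [← abs_mul]; exact le_abs_self _
        have h3 : |ν - vhat T ω| * |u| ≤ δ * |u| := by
          rw [abs_sub_comm]
          exact mul_le_mul_of_nonneg_right hg.le (abs_nonneg u)
        have h5 : ν * u - vhat T ω * u = (ν - vhat T ω) * u := by ring
        linarith [hω]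
    have hle1 := aux_toReal_union P hsub1
    have hle2 := aux_toReal_union P hsub2
    have habs1 := abs_lt.mp hq1'
    have habs2 := abs_lt.mp hq2'
    have habs3 := abs_lt.mp hb'
    rw [sub_zero] at habs3
    rw [abs_lt]
    constructor <;> linarith
  -- Case m2 < Δ : limit 1
  · intro hm
    refine Tendsto.congr' heqev ?_
    rw [Metric.tendsto_nhds]
    intro ε hε
    obtain ⟨M, hM⟩ : ∃ M : ℝ, 1 - ε / 4 < (μ0 (Iic M)).toReal := by
      have htend := tendsto_measure_Iic_atTop (μ := μ0)
      rw [measure_univ] at htend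
      have hr := (ENNReal.tendsto_toReal ENNReal.one_ne_top).comp htend
      rw [ENNReal.toReal_one] at hr
      have hev2 := hr.eventually_const_lt (show 1 - ε / 4 < (1:ℝ) by linarith)
      obtain ⟨M, hM⟩ := hev2.exists
      exact ⟨M, hM⟩
    have hcT : ∀ᶠ T : ℕ in atTop, M + ν * |u| + |u| ≤ c T := by
      have hpos : 0 < Δ - m2 := by linarith
      filter_upwards [aux_sqrt_event ((M + ν * |u| + |u|) / (Δ - m2))] with T hT
      have hK : (M + ν * |u| + |u|) / (Δ - m2) * (Δ - m2) = M + ν * |u| + |u| :=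
        div_mul_cancel₀ _ (ne_of_gt hpos)
      have h2 := mul_le_mul_of_nonneg_right hT hpos.le
      simp only [hc]
      nlinarith [h2, hK]
    have hq := Metric.tendsto_nhds.mp (hcdf M) (ε / 4) (by linarith)
    have hb := Metric.tendsto_nhds.mp (hbad 1 one_pos) (ε / 4) (by linarith)
    filter_upwards [hcT, hq, hb] with T hcT' hq' hb'
    rw [Real.dist_eq] at hq' hb' ⊢
    have hsub : {ω | X T ω < M}
        ⊆ {ω | X T ω < vhat T ω * u + c T} ∪ {ω | (1:ℝ) ≤ dist (vhat T ω) ν} := by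
      intro ω hω
      simp only [Set.mem_setOf_eq, Set.mem_union] at *
      by_cases hg : (1:ℝ) ≤ dist (vhat T ω) ν
      · exact Or.inr hg
      · left
        rw [Real.dist_eq] at hg
        push_neg at hg
        have h2 : -(|vhat T ω - ν| * |u|) ≤ (vhat T ω - ν) * u := by
          rw [← abs_mul]; exact neg_abs_le _
        have h3 : |vhat T ω - ν| * |u| ≤ 1 * |u| :=
          mul_le_mul_of_nonneg_right hg.le (abs_nonneg u)
        have h4 : -(ν * |u|) ≤ ν * u := by
          have := mul_le_mul_of_nonneg_left (neg_abs_le u) hν.le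
          linarith [this]
        have h5 : vhat T ω * u - ν * u = (vhat T ω - ν) * u := by ring
        linarith [hω]
    have hle := aux_toReal_union P hsub
    have hup := hP1 {ω | X T ω < vhat T ω * u + c T}
    have habs1 := abs_lt.mp hq'
    have habs2 := abs_lt.mp hb'
    rw [sub_zero] at habs2
    rw [abs_lt]
    constructor <;> linarith
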